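/- Let a_i, b_j ∈ Act for i < n, j < m, and let all t_i, s_j be CLL process terms. (1) If {a_i : i < n} ≠ {b_j : j < m} then □_{i<n}a_i.t_i ∧ □_{j<m}b_j.s_j =_RS ⊥. (2) If {a_i : i < n} = {b_j : j < m} then □_{a_i=b_j, i<n, j<m} a_i.(t_i∧s_j) ⊑_RS □_{i<n}a_i.t_i ∧ □_{j<m}b_j.s_j. (3) □_{i<n}a_i.(t_i∧s_i) ⊑_RS □_{i<n}a_i.t_i ∧ □_{i<n}a_i.s_i. -/

import Mathlib

namespace CLL

attribute [local instance] Classical.propDecidable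

/-- CLL process terms over a set `Act` of visible actions.  The action `τ` is
represented by `none : Option Act`, a visible action `a` by `some a`. -/
inductive Tm (Act : Type) : Type where
  | nil  : Tm Act                            -- 0
  | bot  : Tm Act                            -- ⊥
  | pre  : Option Act → Tm Act → Tm Act      -- α.t
  | ec   : Tm Act → Tm Act → Tm Act          -- t □ t
  | conj : Tm Act → Tm Act → Tm Act          -- t ∧ t
  | disj : Tm Act → Tm Act → Tm Act          -- t ∨ t
  | par  : Set Act → Tm Act → Tm Act → Tm Act -- t ∥_A t

/-- A transition model: a set of transitions `t →α t'`, of instances `t F` of the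
inconsistency predicate, and of instances `t F̄_α` of the auxiliary predicates. -/
structure Model (Act : Type) where
  Tr   : Tm Act → Option Act → Tm Act → Prop
  F    : Tm Act → Prop
  Fbar : Tm Act → Option Act → Prop

variable {Act : Type}

/-- The least transition relation of the positive TSS `Strip(P_CLL, M)`:
ground instances of transition rules of `P_CLL` whose negative premises
(checked against `M`) hold, with those negative premises removed. -/
inductive STr (M : Model Act) : Tm Act → Option Act → Tm Act → Prop where
  | pre (α : Option Act) (t : Tm Act) : STr M (Tm.pre α t) α t
  | ecL {t1 t2 y1 : Tm Act} {a : Act} :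
      STr M t1 (some a) y1 → (∀ y, ¬ M.Tr t2 none y) →
      STr M (Tm.ec t1 t2) (some a) y1
  | ecR {t1 t2 y2 : Tm Act} {a : Act} :
      (∀ y, ¬ M.Tr t1 none y) → STr M t2 (some a) y2 →
      STr M (Tm.ec t1 t2) (some a) y2
  | ecTauL {t1 t2 y1 : Tm Act} :
      STr M t1 none y1 → STr M (Tm.ec t1 t2) none (Tm.ec y1 t2)
  | ecTauR {t1 t2 y2 : Tm Act} :
      STr M t2 none y2 → STr M (Tm.ec t1 t2) none (Tm.ec t1 y2)
  | conjAct {t1 t2 y1 y2 : Tm Act} {a : Act} :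
      STr M t1 (some a) y1 → STr M t2 (some a) y2 →
      STr M (Tm.conj t1 t2) (some a) (Tm.conj y1 y2)
  | conjTauL {t1 t2 y1 : Tm Act} :
      STr M t1 none y1 → STr M (Tm.conj t1 t2) none (Tm.conj y1 t2)
  | conjTauR {t1 t2 y2 : Tm Act} :
      STr M t2 none y2 → STr M (Tm.conj t1 t2) none (Tm.conj t1 y2)
  | disjL (t1 t2 : Tm Act) : STr M (Tm.disj t1 t2) none t1
  | disjR (t1 t2 : Tm Act) : STr M (Tm.disj t1 t2) none t2
  | parTauL {A : Set Act} {t1 t2 y1 : Tm Act} :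
      STr M t1 none y1 → STr M (Tm.par A t1 t2) none (Tm.par A y1 t2)
  | parTauR {A : Set Act} {t1 t2 y2 : Tm Act} :
      STr M t2 none y2 → STr M (Tm.par A t1 t2) none (Tm.par A t1 y2)
  | parL {A : Set Act} {t1 t2 y1 : Tm Act} {a : Act} :
      STr M t1 (some a) y1 → (∀ y, ¬ M.Tr t2 none y) → a ∉ A →
      STr M (Tm.par A t1 t2) (some a) (Tm.par A y1 t2)
  | parR {A : Set Act} {t1 t2 y2 : Tm Act} {a : Act} :
      (∀ y, ¬ M.Tr t1 none y) → STr M t2 (some a) y2 → a ∉ A →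
      STr M (Tm.par A t1 t2) (some a) (Tm.par A t1 y2)
  | parSync {A : Set Act} {t1 t2 y1 y2 : Tm Act} {a : Act} :
      STr M t1 (some a) y1 → STr M t2 (some a) y2 → a ∈ A →
      STr M (Tm.par A t1 t2) (some a) (Tm.par A y1 y2)

/-- Least model of the `F̄_α` rules of `Strip(P_CLL, M)`. -/
inductive SFbar (M : Model Act) : Tm Act → Option Act → Prop where
  | intro {t1 t2 y : Tm Act} {α : Option Act} :
      STr M (Tm.conj t1 t2) α y → ¬ M.F y → SFbar M (Tm.conj t1 t2) α

/-- Least model of the `F` rules of `Strip(P_CLL, M)`. -/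
inductive SF (M : Model Act) : Tm Act → Prop where
  | bot : SF M Tm.bot
  | pre {t : Tm Act} (α : Option Act) : SF M t → SF M (Tm.pre α t)
  | disj {t1 t2 : Tm Act} : SF M t1 → SF M t2 → SF M (Tm.disj t1 t2)
  | ecL {t1 t2 : Tm Act} : SF M t1 → SF M (Tm.ec t1 t2)
  | ecR {t1 t2 : Tm Act} : SF M t2 → SF M (Tm.ec t1 t2)
  | conjL {t1 t2 : Tm Act} : SF M t1 → SF M (Tm.conj t1 t2)
  | conjR {t1 t2 : Tm Act} : SF M t2 → SF M (Tm.conj t1 t2)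
  | parL {A : Set Act} {t1 t2 : Tm Act} : SF M t1 → SF M (Tm.par A t1 t2)
  | parR {A : Set Act} {t1 t2 : Tm Act} : SF M t2 → SF M (Tm.par A t1 t2)
  | conjMisL {t1 t2 y1 : Tm Act} {a : Act} :
      STr M t1 (some a) y1 → (∀ y, ¬ M.Tr t2 (some a) y) →
      (∀ y, ¬ M.Tr (Tm.conj t1 t2) none y) → SF M (Tm.conj t1 t2)
  | conjMisR {t1 t2 y2 : Tm Act} {a : Act} :
      (∀ y, ¬ M.Tr t1 (some a) y) → STr M t2 (some a) y2 →
      (∀ y, ¬ M.Tr (Tm.conj t1 t2) none y) → SF M (Tm.conj t1 t2)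
  | conjDead {t1 t2 z : Tm Act} {α : Option Act} :
      STr M (Tm.conj t1 t2) α z → ¬ M.Fbar (Tm.conj t1 t2) α →
      SF M (Tm.conj t1 t2)

/-- `M` is a stable transition model of `P_CLL`:  `M` coincides with the least
model of the positive TSS `Strip(P_CLL, M)`. -/
def IsStable (M : Model Act) : Prop :=
  (∀ t α t', M.Tr t α t' ↔ STr M t α t') ∧
  (∀ t, M.F t ↔ SF M t) ∧
  (∀ t α, M.Fbar t α ↔ SFbar M t α)

/-- `t` is stable: it has no τ-transition. -/
def Stable (M : Model Act) (t : Tm Act) : Prop := ∀ t', ¬ M.Tr t none t'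

/-- The ready set `I(t)`. -/
def Ready (M : Model Act) (t : Tm Act) : Set (Option Act) :=
  {α | ∃ u, M.Tr t α u}

/-- One τ-step between consistent terms: `t →τ_F s`. -/
def TauF (M : Model Act) (t s : Tm Act) : Prop :=
  M.Tr t none s ∧ ¬ M.F t ∧ ¬ M.F s

/-- `t ⇒ε_F s`: a sequence of τ-transitions all whose terms (endpoints included)
are consistent. -/
def EpsF (M : Model Act) (t s : Tm Act) : Prop :=
  ¬ M.F t ∧ Relation.ReflTransGen (TauF M) t s

/-- `t ⇒ε_F| s`:  `t ⇒ε_F s` with `s` stable. -/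
def EpsFS (M : Model Act) (t s : Tm Act) : Prop :=
  EpsF M t s ∧ Stable M s

/-- `t ⇒α_F s`. -/
def WeakF (M : Model Act) (α : Option Act) (t s : Tm Act) : Prop :=
  ∃ r p, EpsF M t r ∧ M.Tr r α p ∧ EpsF M p s

/-- `t ⇒α_F| s`. -/
def WeakFS (M : Model Act) (α : Option Act) (t s : Tm Act) : Prop :=
  WeakF M α t s ∧ Stable M s

/-- `R` is a stable ready simulation relation. -/
def IsRS (M : Model Act) (R : Tm Act → Tm Act → Prop) : Prop :=
  ∀ t s, R t s →
    (Stable M t ∧ Stable M s) ∧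
    (¬ M.F t → ¬ M.F s) ∧
    (∀ (a : Act) t', WeakFS M (some a) t t' →
      ∃ s', WeakFS M (some a) s s' ∧ R t' s') ∧
    (¬ M.F t → Ready M t = Ready M s)

/-- `t ⊏̃_RS s`. -/
def RSs (M : Model Act) (t s : Tm Act) : Prop :=
  ∃ R, IsRS M R ∧ R t s

/-- `t ⊑_RS s`. -/
def RSle (M : Model Act) (t s : Tm Act) : Prop :=
  ∀ t', EpsFS M t t' → ∃ s', EpsFS M s s' ∧ RSs M t' s'

/-- `t =_RS s`. -/
def RSeq (M : Model Act) (t s : Tm Act) : Prop :=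
  RSle M t s ∧ RSle M s t

/-- The binary operators `□`, `∧` and `∥_A`. -/
def IsStaticOp (Act : Type) (op : Tm Act → Tm Act → Tm Act) : Prop :=
  op = Tm.ec ∨ op = Tm.conj ∨ ∃ A : Set Act, op = Tm.par A

/-- General external choice `□_{i<n} t_i` over a finite sequence of terms. -/
def bigEC : List (Tm Act) → Tm Act
  | [] => Tm.nil
  | t :: ts => ts.foldl Tm.ec t

/-- General disjunction `⋁_{i<n} t_i` over a finite (nonempty) sequence. -/
def bigDisj : List (Tm Act) → Tm Act
  | [] => Tm.nil
  | t :: ts => ts.foldl Tm.disj t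

/-- `□_{i<n} a_i.t_i` for a sequence of prefixed terms given by pairs. -/
def ecPre (l : List (Act × Tm Act)) : Tm Act :=
  bigEC (l.map fun p => Tm.pre (some p.1) p.2)

/-- The sequence of all `a_i.(t_i ∧ s_j)` with `a_i = b_j`. -/
noncomputable def matched (l1 l2 : List (Act × Tm Act)) : List (Act × Tm Act) :=
  ((l1.product l2).filter fun q => decide (q.1.1 = q.2.1)).map
    fun q => (q.1.1, Tm.conj q.1.2 q.2.2)

/-- The right-hand side `((□Ω1)□(□Ω2))□(□Ω3)` of the expansion law. -/
noncomputable def expRHS (A : Set Act) (l1 l2 : List (Act × Tm Act)) : Tm Act :=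
  Tm.ec
    (Tm.ec
      (bigEC ((l1.filter fun p => decide (p.1 ∉ A)).map
        fun p => Tm.pre (some p.1) (Tm.par A p.2 (ecPre l2))))
      (bigEC ((l2.filter fun q => decide (q.1 ∉ A)).map
        fun q => Tm.pre (some q.1) (Tm.par A (ecPre l1) q.2))))
    (bigEC (((l1.product l2).filter fun q => decide (q.1.1 = q.2.1 ∧ q.1.1 ∈ A)).map
      fun q => Tm.pre (some q.1.1) (Tm.par A q.1.2 q.2.2)))

/-- Basic process terms: built from `0` by prefixing, `∨`, `□` and `∥_A`. -/
inductive Basic : Tm Act → Prop where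
  | nil : Basic Tm.nil
  | pre (α : Option Act) {t : Tm Act} : Basic t → Basic (Tm.pre α t)
  | disj {t1 t2 : Tm Act} : Basic t1 → Basic t2 → Basic (Tm.disj t1 t2)
  | ec {t1 t2 : Tm Act} : Basic t1 → Basic t2 → Basic (Tm.ec t1 t2)
  | par (A : Set Act) {t1 t2 : Tm Act} :
      Basic t1 → Basic t2 → Basic (Tm.par A t1 t2)

/-- Derivability `⊢ t ≤ s` in the axiomatic system `AX_CLL`. -/
inductive Deriv : Tm Act → Tm Act → Prop where
  -- inference rules
  | refl (t : Tm Act) : Deriv t t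
  | trans {t u s : Tm Act} : Deriv t u → Deriv u s → Deriv t s
  | pre_mono (α : Option Act) {t s : Tm Act} :
      Deriv t s → Deriv (Tm.pre α t) (Tm.pre α s)
  | ec_mono {t1 s1 t2 s2 : Tm Act} :
      Deriv t1 s1 → Deriv t2 s2 → Deriv (Tm.ec t1 t2) (Tm.ec s1 s2)
  | conj_mono {t1 s1 t2 s2 : Tm Act} :
      Deriv t1 s1 → Deriv t2 s2 → Deriv (Tm.conj t1 t2) (Tm.conj s1 s2)
  | disj_mono {t1 s1 t2 s2 : Tm Act} :
      Deriv t1 s1 → Deriv t2 s2 → Deriv (Tm.disj t1 t2) (Tm.disj s1 s2)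
  | par_mono (A : Set Act) {t1 s1 t2 s2 : Tm Act} :
      Deriv t1 s1 → Deriv t2 s2 → Deriv (Tm.par A t1 t2) (Tm.par A s1 s2)
  -- EC1–EC5
  | ec_comm (x y : Tm Act) : Deriv (Tm.ec x y) (Tm.ec y x)
  | ec_assoc1 (x y z : Tm Act) : Deriv (Tm.ec (Tm.ec x y) z) (Tm.ec x (Tm.ec y z))
  | ec_assoc2 (x y z : Tm Act) : Deriv (Tm.ec x (Tm.ec y z)) (Tm.ec (Tm.ec x y) z)
  | ec_idem1 (x : Tm Act) : Deriv (Tm.ec x x) x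
  | ec_idem2 (x : Tm Act) : Deriv x (Tm.ec x x)
  | ec_nil1 (x : Tm Act) : Deriv (Tm.ec x Tm.nil) x
  | ec_nil2 (x : Tm Act) : Deriv x (Tm.ec x Tm.nil)
  | ec_bot1 (x : Tm Act) : Deriv (Tm.ec x Tm.bot) Tm.bot
  | ec_bot2 (x : Tm Act) : Deriv Tm.bot (Tm.ec x Tm.bot)
  -- DI1–DI5
  | di_comm (x y : Tm Act) : Deriv (Tm.disj x y) (Tm.disj y x)
  | di_assoc1 (x y z : Tm Act) :
      Deriv (Tm.disj x (Tm.disj y z)) (Tm.disj (Tm.disj x y) z)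
  | di_assoc2 (x y z : Tm Act) :
      Deriv (Tm.disj (Tm.disj x y) z) (Tm.disj x (Tm.disj y z))
  | di_idem1 (x : Tm Act) : Deriv (Tm.disj x x) x
  | di_idem2 (x : Tm Act) : Deriv x (Tm.disj x x)
  | di_bot1 (x : Tm Act) : Deriv (Tm.disj x Tm.bot) x
  | di_bot2 (x : Tm Act) : Deriv x (Tm.disj x Tm.bot)
  | di_le (x y : Tm Act) : Deriv x (Tm.disj x y)
  -- CO1–CO4
  | co_comm (x y : Tm Act) : Deriv (Tm.conj x y) (Tm.conj y x)
  | co_assoc1 (x y z : Tm Act) :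
      Deriv (Tm.conj (Tm.conj x y) z) (Tm.conj x (Tm.conj y z))
  | co_assoc2 (x y z : Tm Act) :
      Deriv (Tm.conj x (Tm.conj y z)) (Tm.conj (Tm.conj x y) z)
  | co_idem1 (x : Tm Act) : Deriv (Tm.conj x x) x
  | co_idem2 (x : Tm Act) : Deriv x (Tm.conj x x)
  | co_bot1 (x : Tm Act) : Deriv (Tm.conj x Tm.bot) Tm.bot
  | co_bot2 (x : Tm Act) : Deriv Tm.bot (Tm.conj x Tm.bot)
  -- DS1–DS4
  | ds1 (x y z : Tm Act) :
      Deriv (Tm.ec x (Tm.disj y z)) (Tm.disj (Tm.ec x y) (Tm.ec x z))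
  | ds2 (x y z : Tm Act) :
      Deriv (Tm.conj x (Tm.disj y z)) (Tm.disj (Tm.conj x y) (Tm.conj x z))
  | ds3 (A : Set Act) (x y z : Tm Act) :
      Deriv (Tm.par A x (Tm.disj y z)) (Tm.disj (Tm.par A x y) (Tm.par A x z))
  | ds4 (a : Act) {x y : Tm Act} : Basic x → Basic y →
      Deriv (Tm.pre (some a) (Tm.disj x y))
            (Tm.ec (Tm.pre (some a) x) (Tm.pre (some a) y))
  -- PR1, PR2
  | pr1a (a : Act) : Deriv (Tm.pre (some a) Tm.bot) Tm.bot
  | pr1b (a : Act) : Deriv Tm.bot (Tm.pre (some a) Tm.bot)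
  | pr2a (x : Tm Act) : Deriv (Tm.pre none x) x
  | pr2b (x : Tm Act) : Deriv x (Tm.pre none x)
  -- PA1, PA2
  | pa_comm (A : Set Act) (x y : Tm Act) : Deriv (Tm.par A x y) (Tm.par A y x)
  | pa_bot1 (A : Set Act) (x : Tm Act) : Deriv (Tm.par A x Tm.bot) Tm.bot
  | pa_bot2 (A : Set Act) (x : Tm Act) : Deriv Tm.bot (Tm.par A x Tm.bot)
  -- ECC1–ECC3
  | ecc1a (l1 l2 : List (Act × Tm Act)) :
      ({a | a ∈ l1.map Prod.fst} : Set Act) ≠ {a | a ∈ l2.map Prod.fst} →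
      Deriv (Tm.conj (ecPre l1) (ecPre l2)) Tm.bot
  | ecc1b (l1 l2 : List (Act × Tm Act)) :
      ({a | a ∈ l1.map Prod.fst} : Set Act) ≠ {a | a ∈ l2.map Prod.fst} →
      Deriv Tm.bot (Tm.conj (ecPre l1) (ecPre l2))
  | ecc2 (l : List (Act × Tm Act × Tm Act)) :
      Deriv (ecPre (l.map fun p => (p.1, Tm.conj p.2.1 p.2.2)))
            (Tm.conj (ecPre (l.map fun p => (p.1, p.2.1)))
                     (ecPre (l.map fun p => (p.1, p.2.2))))
  | ecc3 (l : List (Act × Tm Act × Tm Act)) :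
      (l.map Prod.fst).Nodup →
      Deriv (Tm.conj (ecPre (l.map fun p => (p.1, p.2.1)))
                     (ecPre (l.map fun p => (p.1, p.2.2))))
            (ecPre (l.map fun p => (p.1, Tm.conj p.2.1 p.2.2)))
  -- EXP1, EXP2
  | exp1 (A : Set Act) (l1 l2 : List (Act × Tm Act)) :
      (∀ p ∈ l1, Basic p.2) → (∀ q ∈ l2, Basic q.2) →
      Deriv (Tm.par A (ecPre l1) (ecPre l2)) (expRHS A l1 l2)
  | exp2 (A : Set Act) (l1 l2 : List (Act × Tm Act)) :
      (∀ p ∈ l1, Basic p.2) → (∀ q ∈ l2, Basic q.2) →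
      Deriv (expRHS A l1 l2) (Tm.par A (ecPre l1) (ecPre l2))

/-- The set `NF_B` of normal forms different from `⊥`. -/
inductive NFB : Tm Act → Prop where
  | mk (ls : List (List (Act × Tm Act))) :
      ls ≠ [] →
      (∀ l ∈ ls, (l.map Prod.fst).Nodup) →
      (∀ l ∈ ls, ∀ p ∈ l, NFB p.2) →
      NFB (bigDisj (ls.map ecPre))

/-- Normal forms. -/
def NF (t : Tm Act) : Prop := t = Tm.bot ∨ NFB t

end CLL


namespace CLL
attribute [local instance] Classical.propDecidable

variable {Act : Type} {M : Model Act}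

lemma str_pre_iff {α β : Option Act} {t u : Tm Act} :
    STr M (Tm.pre α t) β u ↔ β = α ∧ u = t := by
  constructor
  · rintro h; cases h; exact ⟨rfl, rfl⟩
  · rintro ⟨rfl, rfl⟩; exact STr.pre _ _

lemma str_nil {α : Option Act} {u : Tm Act} : ¬ STr M Tm.nil α u := by
  rintro h; cases h

lemma str_ec_iff (hTr : ∀ t α t', M.Tr t α t' ↔ STr M t α t')
    {t1 t2 : Tm Act} (h1 : ∀ u, ¬ STr M t1 none u) (h2 : ∀ u, ¬ STr M t2 none u)
    {α : Option Act} {u : Tm Act} :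
    STr M (Tm.ec t1 t2) α u ↔ STr M t1 α u ∨ STr M t2 α u := by
  constructor
  · intro h
    cases h with
    | ecL h _ => exact Or.inl h
    | ecR _ h => exact Or.inr h
    | ecTauL h => exact absurd h (h1 _)
    | ecTauR h => exact absurd h (h2 _)
  · rintro (h | h)
    · cases α with
      | none => exact absurd h (h1 _)
      | some a => exact STr.ecL h (fun y hy => h2 y ((hTr _ _ _).mp hy))
    · cases α with
      | none => exact absurd h (h2 _)
      | some a => exact STr.ecR (fun y hy => h1 y ((hTr _ _ _).mp hy)) h

lemma str_foldl_ec (hTr : ∀ t α t', M.Tr t α t' ↔ STr M t α t')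
    (L : List (Tm Act)) :
    ∀ (acc : Tm Act), (∀ u, ¬ STr M acc none u) →
      (∀ t ∈ L, ∀ u, ¬ STr M t none u) →
      ∀ α u, (STr M (L.foldl Tm.ec acc) α u ↔
        STr M acc α u ∨ ∃ t ∈ L, STr M t α u) := by
  induction L with
  | nil => intro acc hacc _ α u; simp
  | cons t ts ih =>
    intro acc hacc hL α u
    have ht : ∀ u, ¬ STr M t none u := hL t (by simp)
    have hts : ∀ s ∈ ts, ∀ u, ¬ STr M s none u := fun s hs => hL s (by simp [hs])
    have hacc' : ∀ u, ¬ STr M (Tm.ec acc t) none u := by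
      intro u h
      rcases (str_ec_iff hTr hacc ht).mp h with h | h
      · exact hacc _ h
      · exact ht _ h
    rw [List.foldl_cons, ih (Tm.ec acc t) hacc' hts α u, str_ec_iff hTr hacc ht]
    constructor
    · rintro ((h | h) | ⟨s, hs, h⟩)
      · exact Or.inl h
      · exact Or.inr ⟨t, by simp, h⟩
      · exact Or.inr ⟨s, by simp [hs], h⟩
    · rintro (h | ⟨s, hs, h⟩)
      · exact Or.inl (Or.inl h)
      · rcases List.mem_cons.mp hs with rfl | hs
        · exact Or.inl (Or.inr h)
        · exact Or.inr ⟨s, hs, h⟩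

lemma ecPre_tr (hTr : ∀ t α t', M.Tr t α t' ↔ STr M t α t')
    (l : List (Act × Tm Act)) {α : Option Act} {u : Tm Act} :
    STr M (ecPre l) α u ↔ ∃ p ∈ l, α = some p.1 ∧ u = p.2 := by
  cases l with
  | nil => simp [ecPre, bigEC, str_nil]
  | cons p ps =>
    have hpre : ∀ (q : Act × Tm Act) (u : Tm Act),
        ¬ STr M (Tm.pre (some q.1) q.2) none u := by
      intro q u h; rcases str_pre_iff.mp h with ⟨h, -⟩; exact (nomatch h)
    have hL : ∀ t ∈ ps.map (fun q => Tm.pre (some q.1) q.2), ∀ u, ¬ STr M t none u := by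
      intro t ht u
      simp only [List.mem_map] at ht
      obtain ⟨q, -, rfl⟩ := ht
      exact hpre q u
    rw [ecPre, List.map_cons, bigEC]
    rw [str_foldl_ec hTr _ _ (hpre p) hL α u]
    simp only [List.mem_map]
    constructor
    · rintro (h | ⟨t, ⟨q, hq, rfl⟩, h⟩)
      · obtain ⟨rfl, rfl⟩ := str_pre_iff.mp h
        exact ⟨p, by simp, rfl, rfl⟩
      · obtain ⟨rfl, rfl⟩ := str_pre_iff.mp h
        exact ⟨q, by simp [hq], rfl, rfl⟩
    · rintro ⟨q, hq, rfl, rfl⟩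
      rcases List.mem_cons.mp hq with rfl | hq
      · exact Or.inl (str_pre_iff.mpr ⟨rfl, rfl⟩)
      · exact Or.inr ⟨_, ⟨q, hq, rfl⟩, str_pre_iff.mpr ⟨rfl, rfl⟩⟩

lemma ecPre_stable (hTr : ∀ t α t', M.Tr t α t' ↔ STr M t α t')
    (l : List (Act × Tm Act)) : ∀ u, ¬ STr M (ecPre l) none u := by
  intro u h
  rcases (ecPre_tr hTr l).mp h with ⟨p, -, h, -⟩
  exact nomatch h

lemma sf_nil : ¬ SF M (Tm.nil : Tm Act) := by rintro h; cases h

lemma sf_pre_iff {α : Option Act} {t : Tm Act} : SF M (Tm.pre α t) ↔ SF M t := by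
  constructor
  · rintro h; cases h with | pre _ h => exact h
  · exact SF.pre α

lemma sf_ec_iff {t1 t2 : Tm Act} : SF M (Tm.ec t1 t2) ↔ SF M t1 ∨ SF M t2 := by
  constructor
  · rintro h
    cases h with
    | ecL h => exact Or.inl h
    | ecR h => exact Or.inr h
  · rintro (h | h)
    · exact SF.ecL h
    · exact SF.ecR h

lemma sf_foldl_ec (L : List (Tm Act)) :
    ∀ acc : Tm Act, SF M (L.foldl Tm.ec acc) ↔ SF M acc ∨ ∃ t ∈ L, SF M t := by
  induction L with
  | nil => intro acc; simp
  | cons t ts ih =>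
    intro acc
    rw [List.foldl_cons, ih, sf_ec_iff]
    constructor
    · rintro ((h | h) | ⟨s, hs, h⟩)
      · exact Or.inl h
      · exact Or.inr ⟨t, by simp, h⟩
      · exact Or.inr ⟨s, by simp [hs], h⟩
    · rintro (h | ⟨s, hs, h⟩)
      · exact Or.inl (Or.inl h)
      · rcases List.mem_cons.mp hs with rfl | hs
        · exact Or.inl (Or.inr h)
        · exact Or.inr ⟨s, hs, h⟩

lemma ecPre_F (l : List (Act × Tm Act)) :
    SF M (ecPre l) ↔ ∃ p ∈ l, SF M p.2 := by
  cases l with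
  | nil => simp [ecPre, bigEC, sf_nil]
  | cons p ps =>
    rw [ecPre, List.map_cons, bigEC, sf_foldl_ec]
    simp only [List.mem_map]
    constructor
    · rintro (h | ⟨t, ⟨q, hq, rfl⟩, h⟩)
      · exact ⟨p, by simp, sf_pre_iff.mp h⟩
      · exact ⟨q, by simp [hq], sf_pre_iff.mp h⟩
    · rintro ⟨q, hq, h⟩
      rcases List.mem_cons.mp hq with rfl | hq
      · exact Or.inl (sf_pre_iff.mpr h)
      · exact Or.inr ⟨_, ⟨q, hq, rfl⟩, sf_pre_iff.mpr h⟩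

lemma str_conj_iff (hTr : ∀ t α t', M.Tr t α t' ↔ STr M t α t')
    {t1 t2 : Tm Act} (h1 : ∀ u, ¬ STr M t1 none u) (h2 : ∀ u, ¬ STr M t2 none u)
    {α : Option Act} {u : Tm Act} :
    STr M (Tm.conj t1 t2) α u ↔
      ∃ a y1 y2, α = some a ∧ u = Tm.conj y1 y2 ∧
        STr M t1 (some a) y1 ∧ STr M t2 (some a) y2 := by
  constructor
  · intro h
    cases h with
    | conjAct ha hb => exact ⟨_, _, _, rfl, rfl, ha, hb⟩
    | conjTauL h => exact absurd h (h1 _)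
    | conjTauR h => exact absurd h (h2 _)
  · rintro ⟨a, y1, y2, rfl, rfl, ha, hb⟩
    exact STr.conjAct ha hb

lemma eps_refl_of_stable {t r : Tm Act} (ht : Stable M t)
    (h : Relation.ReflTransGen (TauF M) t r) : r = t := by
  rcases Relation.ReflTransGen.cases_head h with rfl | ⟨c, hc, -⟩
  · rfl
  · exact absurd hc.1 (ht c)

/-- Key lemma: matching moves with identical targets yield `RSle`. -/
lemma rsle_of (hTr : ∀ t α t', M.Tr t α t' ↔ STr M t α t')
    {t s : Tm Act} (ht : Stable M t) (hs : Stable M s)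
    (hF : ¬ M.F t → ¬ M.F s)
    (hready : Ready M t = Ready M s)
    (hmove : ∀ (a : Act) p, M.Tr t (some a) p → M.Tr s (some a) p) :
    RSle M t s := by
  intro t' ht'
  obtain ⟨⟨hFt, hsteps⟩, -⟩ := ht'
  have heq : t' = t := eps_refl_of_stable ht hsteps
  have hFs : ¬ M.F s := hF (heq ▸ hFt)
  refine ⟨s, ⟨⟨hFs, Relation.ReflTransGen.refl⟩, hs⟩, ?_⟩
  refine ⟨fun x y => (x = y ∧ Stable M x) ∨ (x = t ∧ y = s), ?_, Or.inr ⟨heq, rfl⟩⟩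
  rintro x y (⟨rfl, hx⟩ | ⟨rfl, rfl⟩)
  · refine ⟨⟨hx, hx⟩, fun h => h, ?_, fun _ => rfl⟩
    intro a x' hx'
    exact ⟨x', hx', Or.inl ⟨rfl, hx'.2⟩⟩
  · refine ⟨⟨ht, hs⟩, fun _ => hFs, ?_, fun _ => hready⟩
    intro a u hu
    obtain ⟨⟨r, p, hr, hrp, hp⟩, hsu⟩ := hu
    have hrt : r = x := eps_refl_of_stable ht hr.2
    refine ⟨u, ⟨⟨y, p, ⟨hFs, Relation.ReflTransGen.refl⟩, hmove a p (hrt ▸ hrp), hp⟩, hsu⟩,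
      Or.inl ⟨rfl, hsu⟩⟩

lemma mem_matched {l1 l2 : List (Act × Tm Act)} {q : Act × Tm Act} :
    q ∈ matched l1 l2 ↔
      ∃ p ∈ l1, ∃ r ∈ l2, p.1 = r.1 ∧ q = (p.1, Tm.conj p.2 r.2) := by
  simp only [matched, List.mem_map, List.mem_filter, decide_eq_true_iff]
  constructor
  · rintro ⟨⟨p, r⟩, ⟨hmem, heq⟩, rfl⟩
    have := List.pair_mem_product.mp hmem
    exact ⟨p, this.1, r, this.2, heq, rfl⟩
  · rintro ⟨p, hp, r, hr, heq, rfl⟩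
    exact ⟨(p, r), ⟨List.pair_mem_product.mpr ⟨hp, hr⟩, heq⟩, rfl⟩

end CLL

namespace CLL

/-- Core lemma for statements (2) and (3). -/
lemma conj_core {Act : Type} {M : Model Act}
    (hTr : ∀ t α t', M.Tr t α t' ↔ STr M t α t')
    (hF : ∀ t, M.F t ↔ SF M t)
    (hFbar : ∀ t α, M.Fbar t α ↔ SFbar M t α)
    (l1 l2 lm : List (Act × Tm Act))
    (hmem : ∀ a : Act, a ∈ l1.map Prod.fst ↔ a ∈ l2.map Prod.fst)
    (hml : ∀ q ∈ lm, ∃ p ∈ l1, ∃ r ∈ l2, p.1 = r.1 ∧ q = (p.1, Tm.conj p.2 r.2))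
    (hmr : ∀ a : Act, a ∈ l1.map Prod.fst → ∃ q ∈ lm, q.1 = a)
    (hFL : ∀ p ∈ l1, SF M p.2 → ∃ q ∈ lm, SF M q.2)
    (hFR : ∀ r ∈ l2, SF M r.2 → ∃ q ∈ lm, SF M q.2) :
    RSle M (ecPre lm) (Tm.conj (ecPre l1) (ecPre l2)) := by
  have s1 := ecPre_stable hTr l1
  have s2 := ecPre_stable hTr l2
  have slm := ecPre_stable hTr lm
  apply rsle_of hTr
  · intro u hu; exact slm u ((hTr _ _ _).mp hu)
  · intro u hu
    obtain ⟨a, y1, y2, hα, -⟩ := (str_conj_iff hTr s1 s2).mp ((hTr _ _ _).mp hu)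
    exact nomatch hα
  · intro hnl hr
    have hnl' : ∀ q ∈ lm, ¬ SF M q.2 := by
      intro q hq hsf
      exact hnl ((hF _).mpr ((ecPre_F lm).mpr ⟨q, hq, hsf⟩))
    have hr' := (hF _).mp hr
    cases hr' with
    | conjL h =>
      obtain ⟨p, hp, hsf⟩ := (ecPre_F l1).mp h
      obtain ⟨q, hq, hsf'⟩ := hFL p hp hsf
      exact hnl' q hq hsf'
    | conjR h =>
      obtain ⟨r, hr2, hsf⟩ := (ecPre_F l2).mp h
      obtain ⟨q, hq, hsf'⟩ := hFR r hr2 hsf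
      exact hnl' q hq hsf'
    | conjMisL h1 h2 _ =>
      obtain ⟨p, hp, hpa, -⟩ := (ecPre_tr hTr l1).mp h1
      obtain ⟨r, hr2, hra⟩ := List.mem_map.mp
        ((hmem p.1).mp (List.mem_map.mpr ⟨p, hp, rfl⟩))
      apply h2 r.2
      apply (hTr _ _ _).mpr
      rw [hpa]
      exact (ecPre_tr hTr l2).mpr ⟨r, hr2, by rw [hra], rfl⟩
    | conjMisR h1 h2 _ =>
      obtain ⟨r, hr2, hra, -⟩ := (ecPre_tr hTr l2).mp h2
      obtain ⟨p, hp, hpa⟩ := List.mem_map.mp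
        ((hmem r.1).mpr (List.mem_map.mpr ⟨r, hr2, rfl⟩))
      apply h1 p.2
      apply (hTr _ _ _).mpr
      rw [hra]
      exact (ecPre_tr hTr l1).mpr ⟨p, hp, by rw [hpa], rfl⟩
    | conjDead hstep hnb =>
      obtain ⟨a, y1, y2, hα, -, h1, -⟩ := (str_conj_iff hTr s1 s2).mp hstep
      subst hα
      obtain ⟨p, hp, hpa, -⟩ := (ecPre_tr hTr l1).mp h1
      have ha : a = p.1 := Option.some.inj hpa
      subst ha
      obtain ⟨q, hq, hqa⟩ := hmr p.1 (List.mem_map.mpr ⟨p, hp, rfl⟩)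
      obtain ⟨p', hp', r', hr', he, hqe⟩ := hml q hq
      have hstep' : STr M (Tm.conj (ecPre l1) (ecPre l2)) (some q.1) q.2 := by
        rw [hqe]
        exact STr.conjAct ((ecPre_tr hTr l1).mpr ⟨p', hp', rfl, rfl⟩)
          ((ecPre_tr hTr l2).mpr ⟨r', hr', by rw [he], rfl⟩)
      rw [hqa] at hstep'
      apply hnb
      apply (hFbar _ _).mpr
      exact SFbar.intro hstep' (fun h => hnl' q hq ((hF _).mp h))
  · ext β
    simp only [Ready, Set.mem_setOf_eq]
    constructor
    · rintro ⟨u, hu⟩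
      obtain ⟨q, hq, rfl, rfl⟩ := (ecPre_tr hTr lm).mp ((hTr _ _ _).mp hu)
      obtain ⟨p, hp, r, hr2, he, hqe⟩ := hml q hq
      refine ⟨Tm.conj p.2 r.2, (hTr _ _ _).mpr ?_⟩
      rw [hqe]
      exact STr.conjAct ((ecPre_tr hTr l1).mpr ⟨p, hp, rfl, rfl⟩)
        ((ecPre_tr hTr l2).mpr ⟨r, hr2, by rw [he], rfl⟩)
    · rintro ⟨u, hu⟩
      obtain ⟨a, y1, y2, rfl, rfl, h1, h2⟩ :=
        (str_conj_iff hTr s1 s2).mp ((hTr _ _ _).mp hu)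
      obtain ⟨p, hp, hpa, rfl⟩ := (ecPre_tr hTr l1).mp h1
      obtain ⟨q, hq, hqa⟩ := hmr p.1 (List.mem_map.mpr ⟨p, hp, rfl⟩)
      refine ⟨q.2, (hTr _ _ _).mpr ((ecPre_tr hTr lm).mpr ⟨q, hq, ?_, rfl⟩)⟩
      rw [hqa]; exact hpa
  · intro a u hu
    obtain ⟨q, hq, hqa, rfl⟩ := (ecPre_tr hTr lm).mp ((hTr _ _ _).mp hu)
    obtain ⟨p, hp, r, hr2, he, hqe⟩ := hml q hq
    subst hqe
    have ha : a = p.1 := Option.some.inj hqa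
    subst ha
    apply (hTr _ _ _).mpr
    exact STr.conjAct ((ecPre_tr hTr l1).mpr ⟨p, hp, rfl, rfl⟩)
      ((ecPre_tr hTr l2).mpr ⟨r, hr2, by rw [he], rfl⟩)

end CLL

/-- conjunctions of general external choices of prefixed terms. -/
theorem stmt11 (Act : Type) (M : CLL.Model Act) (hM : CLL.IsStable M) :
    (∀ l1 l2 : List (Act × CLL.Tm Act),
      ({a | a ∈ l1.map Prod.fst} : Set Act) ≠ {a | a ∈ l2.map Prod.fst} →
      CLL.RSeq M (CLL.Tm.conj (CLL.ecPre l1) (CLL.ecPre l2)) CLL.Tm.bot) ∧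
    (∀ l1 l2 : List (Act × CLL.Tm Act),
      ({a | a ∈ l1.map Prod.fst} : Set Act) = {a | a ∈ l2.map Prod.fst} →
      CLL.RSle M (CLL.ecPre (CLL.matched l1 l2))
        (CLL.Tm.conj (CLL.ecPre l1) (CLL.ecPre l2))) ∧
    (∀ l : List (Act × CLL.Tm Act × CLL.Tm Act),
      CLL.RSle M (CLL.ecPre (l.map fun p => (p.1, CLL.Tm.conj p.2.1 p.2.2)))
        (CLL.Tm.conj (CLL.ecPre (l.map fun p => (p.1, p.2.1)))
                     (CLL.ecPre (l.map fun p => (p.1, p.2.2))))) := by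
  obtain ⟨hTr, hF, hFbar⟩ := hM
  refine ⟨?_, ?_, ?_⟩
  · -- (1)
    intro l1 l2 hne
    have s1 := CLL.ecPre_stable hTr l1
    have s2 := CLL.ecPre_stable hTr l2
    have hnoτ : ∀ y, ¬ M.Tr (CLL.Tm.conj (CLL.ecPre l1) (CLL.ecPre l2)) none y := by
      intro y hy
      obtain ⟨a, y1, y2, hα, -⟩ :=
        (CLL.str_conj_iff hTr s1 s2).mp ((hTr _ _ _).mp hy)
      exact nomatch hα
    have hex : ∃ a : Act, (a ∈ l1.map Prod.fst ∧ a ∉ l2.map Prod.fst) ∨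
        (a ∈ l2.map Prod.fst ∧ a ∉ l1.map Prod.fst) := by
      by_contra hc
      push_neg at hc
      apply hne
      ext a
      simp only [Set.mem_setOf_eq]
      have := hc a
      tauto
    have hFconj : M.F (CLL.Tm.conj (CLL.ecPre l1) (CLL.ecPre l2)) := by
      rw [hF]
      obtain ⟨a, ⟨h1, h2⟩ | ⟨h1, h2⟩⟩ := hex
      · obtain ⟨p, hp, rfl⟩ := List.mem_map.mp h1
        refine CLL.SF.conjMisL ((CLL.ecPre_tr hTr l1).mpr ⟨p, hp, rfl, rfl⟩) ?_ hnoτ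
        intro y hy
        obtain ⟨q, hq, hq1, -⟩ := (CLL.ecPre_tr hTr l2).mp ((hTr _ _ _).mp hy)
        exact h2 (List.mem_map.mpr ⟨q, hq, (Option.some.inj hq1).symm⟩)
      · obtain ⟨q, hq, rfl⟩ := List.mem_map.mp h1
        refine CLL.SF.conjMisR ?_ ((CLL.ecPre_tr hTr l2).mpr ⟨q, hq, rfl, rfl⟩) hnoτ
        intro y hy
        obtain ⟨p, hp, hp1, -⟩ := (CLL.ecPre_tr hTr l1).mp ((hTr _ _ _).mp hy)
        exact h2 (List.mem_map.mpr ⟨p, hp, (Option.some.inj hp1).symm⟩)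
    constructor
    · intro t' ht'
      exact absurd hFconj ht'.1.1
    · intro t' ht'
      exact absurd ((hF _).mpr CLL.SF.bot) ht'.1.1
  · -- (2)
    intro l1 l2 hset
    have hmem : ∀ a : Act, a ∈ l1.map Prod.fst ↔ a ∈ l2.map Prod.fst := by
      intro a
      have := Set.ext_iff.mp hset a
      simpa using this
    refine CLL.conj_core hTr hF hFbar l1 l2 _ hmem
      (fun q hq => CLL.mem_matched.mp hq) ?_ ?_ ?_
    · intro a ha
      obtain ⟨p, hp, rfl⟩ := List.mem_map.mp ha
      obtain ⟨r, hr2, hra⟩ := List.mem_map.mp ((hmem p.1).mp (List.mem_map.mpr ⟨p, hp, rfl⟩))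
      exact ⟨(p.1, CLL.Tm.conj p.2 r.2),
        CLL.mem_matched.mpr ⟨p, hp, r, hr2, hra.symm, rfl⟩, rfl⟩
    · intro p hp hsf
      obtain ⟨r, hr2, hra⟩ := List.mem_map.mp ((hmem p.1).mp (List.mem_map.mpr ⟨p, hp, rfl⟩))
      exact ⟨(p.1, CLL.Tm.conj p.2 r.2),
        CLL.mem_matched.mpr ⟨p, hp, r, hr2, hra.symm, rfl⟩, CLL.SF.conjL hsf⟩
    · intro r hr2 hsf
      obtain ⟨p, hp, hpa⟩ := List.mem_map.mp ((hmem r.1).mpr (List.mem_map.mpr ⟨r, hr2, rfl⟩))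
      exact ⟨(p.1, CLL.Tm.conj p.2 r.2),
        CLL.mem_matched.mpr ⟨p, hp, r, hr2, hpa, rfl⟩, CLL.SF.conjR hsf⟩
  · -- (3)
    intro l
    refine CLL.conj_core hTr hF hFbar _ _ _ ?_ ?_ ?_ ?_ ?_
    · intro a; simp [List.mem_map]
    · intro q hq
      obtain ⟨p, hp, rfl⟩ := List.mem_map.mp hq
      exact ⟨(p.1, p.2.1), List.mem_map.mpr ⟨p, hp, rfl⟩,
        (p.1, p.2.2), List.mem_map.mpr ⟨p, hp, rfl⟩, rfl, rfl⟩
    · intro a ha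
      simp only [List.map_map, List.mem_map] at ha
      obtain ⟨p, hp, rfl⟩ := ha
      exact ⟨(p.1, CLL.Tm.conj p.2.1 p.2.2), List.mem_map.mpr ⟨p, hp, rfl⟩, rfl⟩
    · intro x hx hsf
      obtain ⟨p, hp, rfl⟩ := List.mem_map.mp hx
      exact ⟨(p.1, CLL.Tm.conj p.2.1 p.2.2), List.mem_map.mpr ⟨p, hp, rfl⟩,
        CLL.SF.conjL hsf⟩
    · intro x hx hsf
      obtain ⟨p, hp, rfl⟩ := List.mem_map.mp hx
      exact ⟨(p.1, CLL.Tm.conj p.2.1 p.2.2), List.mem_map.mpr ⟨p, hp, rfl⟩,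
        CLL.SF.conjR hsf⟩
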